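/- arXiv:1203.3264 — 2 statements merged into one kernel-verified Lean document; each statement's English description precedes it below -/
import Mathlib

section
/- For every non-negative integer n, the number of words of length 2n over {N,E} whose every nonempty prefix has strictly more E's than N's equals binom(2n, n) / 2 when n ≥ 1, equivalently equals the number of northeastern lattice paths from (0,0) to (n,n) starting with an east step. -/
/-- Words over `{N, E}` encoded as `List Bool`, `true` = E, `false` = N. -/
abbrev NEWord := List Bool

/-- Every nonempty prefix has strictly more E's than N's. -/
def strictlyBelowDiag (w : NEWord) : Prop :=
  ∀ t, 0 < t → t ≤ w.length → (w.take t).count false < (w.take t).count true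

/-! ### Auxiliary development -/

lemma count_tt (l : List Bool) : (true :: l).count true = l.count true + 1 := by
  simp [List.count_cons]

lemma count_tf (l : List Bool) : (true :: l).count false = l.count false := by
  simp [List.count_cons]

lemma count_ft (l : List Bool) : (false :: l).count true = l.count true := by
  simp [List.count_cons]

lemma count_ff (l : List Bool) : (false :: l).count false = l.count false + 1 := by
  simp [List.count_cons]

/-- `okb c w = true` iff the walk `w`, started at height `c`, never goes below 0
(reading `true` as +1 and `false` as −1, prefix heights stay ≥ 0). -/
def okb : ℕ → List Bool → Bool
  | _, [] => true
  | c, true :: w => okb (c+1) w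
  | 0, false :: _ => false
  | c+1, false :: w => okb c w

lemma okb_nil (c : ℕ) : okb c [] = true := by cases c <;> rfl

lemma okb_cons_true (c : ℕ) (w : List Bool) : okb c (true :: w) = okb (c+1) w := by
  cases c <;> rfl

lemma okb_cons_false_zero (w : List Bool) : okb 0 (false :: w) = false := rfl

lemma okb_cons_false_succ (c : ℕ) (w : List Bool) : okb (c+1) (false :: w) = okb c w := rfl

lemma okb_iff (w : List Bool) : ∀ c : ℕ,
    okb c w = true ↔
      ∀ t, t ≤ w.length → (w.take t).count false ≤ (w.take t).count true + c := by
  induction w with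
  | nil =>
    intro c
    rw [okb_nil]
    simp only [List.length_nil, Nat.le_zero, true_iff]
    rintro t rfl; simp
  | cons b v ih =>
    intro c
    cases b with
    | true =>
      rw [okb_cons_true, ih (c+1)]
      constructor
      · intro h t ht
        cases t with
        | zero => simp
        | succ t' =>
          simp only [List.take_succ_cons, List.length_cons] at ht ⊢
          rw [count_tt, count_tf]
          have := h t' (by omega)
          omega
      · intro h t ht
        have := h (t+1) (by simpa using ht)
        simp only [List.take_succ_cons] at this
        rw [count_tt, count_tf] at this
        omega
    | false =>
      cases c with
      | zero =>
        rw [okb_cons_false_zero]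
        simp only [Bool.false_eq_true, false_iff]
        intro h
        have := h 1 (by simp)
        simp only [List.take_succ_cons, List.take_zero] at this
        rw [count_ft, count_ff] at this
        simp at this
      | succ c' =>
        rw [okb_cons_false_succ, ih c']
        constructor
        · intro h t ht
          cases t with
          | zero => simp
          | succ t' =>
            simp only [List.take_succ_cons, List.length_cons] at ht ⊢
            rw [count_ft, count_ff]
            have := h t' (by omega)
            omega
        · intro h t ht
          have := h (t+1) (by simpa using ht)
          simp only [List.take_succ_cons] at this
          rw [count_ft, count_ff] at this
          omega

lemma strictlyBelowDiag_cons (b : Bool) (v : List Bool) :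
    strictlyBelowDiag (b :: v) ↔ b = true ∧ okb 0 v = true := by
  rw [okb_iff]
  constructor
  · intro h
    have hb := h 1 (by omega) (by simp)
    simp only [List.take_succ_cons, List.take_zero] at hb
    have hb' : b = true := by
      cases b
      · rw [count_ft, count_ff] at hb; simp at hb
      · rfl
    subst hb'
    refine ⟨rfl, fun t ht => ?_⟩
    have := h (t+1) (by omega) (by simpa using ht)
    simp only [List.take_succ_cons] at this
    rw [count_tt, count_tf] at this
    omega
  · rintro ⟨rfl, h⟩ t ht hle
    cases t with
    | zero => omega
    | succ t' =>
      have := h t' (by simpa using hle)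
      simp only [List.take_succ_cons]
      rw [count_tt, count_tf]
      omega

/-- The finset of all boolean lists of length `m`. -/
def allWords : ℕ → Finset (List Bool)
  | 0 => {[]}
  | m+1 => (allWords m).image (true :: ·) ∪ (allWords m).image (false :: ·)

lemma mem_allWords : ∀ (m : ℕ) (w : List Bool), w ∈ allWords m ↔ w.length = m := by
  intro m
  induction m with
  | zero => intro w; simp [allWords, List.length_eq_zero_iff]
  | succ m ih =>
    intro w
    simp only [allWords, Finset.mem_union, Finset.mem_image]
    constructor
    · rintro (⟨v, hv, rfl⟩ | ⟨v, hv, rfl⟩) <;> simp [(ih v).1 hv]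
    · intro hw
      cases w with
      | nil => simp at hw
      | cons b v =>
        have hv : v ∈ allWords m := (ih v).2 (by simpa using hw)
        cases b
        · exact Or.inr ⟨v, hv, rfl⟩
        · exact Or.inl ⟨v, hv, rfl⟩

lemma card_filter_allWords_succ (p : List Bool → Prop) [DecidablePred p] (m : ℕ) :
    ((allWords (m+1)).filter p).card =
      ((allWords m).filter (fun w => p (true :: w))).card +
      ((allWords m).filter (fun w => p (false :: w))).card := by
  have hinj : ∀ b : Bool, Function.Injective (b :: · : List Bool → List Bool) := by
    intro b x y h; simpa using h
  rw [show allWords (m+1) = (allWords m).image (true :: ·) ∪ (allWords m).image (false :: ·)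
      from rfl]
  rw [Finset.filter_union, Finset.card_union_of_disjoint, Finset.filter_image,
    Finset.filter_image, Finset.card_image_of_injective _ (hinj true),
    Finset.card_image_of_injective _ (hinj false)]
  · refine Finset.disjoint_filter_filter (Finset.disjoint_left.2 ?_)
    rintro w hw hw'
    simp only [Finset.mem_image] at hw hw'
    obtain ⟨x, -, rfl⟩ := hw
    obtain ⟨y, -, h⟩ := hw'
    simp at h

/-- Number of nonnegative walks of length `m` starting at height `c`. -/
def W (m c : ℕ) : ℕ := ((allWords m).filter (fun w => okb c w = true)).card

lemma W_zero (c : ℕ) : W 0 c = 1 := by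
  rw [W, show allWords 0 = {[]} from rfl, Finset.filter_singleton, if_pos (okb_nil c)]
  rfl

lemma W_succ (m c : ℕ) :
    W (m+1) c = W m (c+1) + (if c = 0 then 0 else W m (c-1)) := by
  rw [W, card_filter_allWords_succ]
  have e1 : ((allWords m).filter (fun w => okb c (true :: w) = true)) =
      ((allWords m).filter (fun w => okb (c+1) w = true)) := by
    apply Finset.filter_congr
    intro w _
    rw [okb_cons_true]
  rw [e1]
  congr 1
  cases c with
  | zero =>
    rw [if_pos rfl, Finset.card_eq_zero, Finset.filter_eq_empty_iff]
    intro w _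
    simp [okb_cons_false_zero]
  | succ c' =>
    rw [if_neg (Nat.succ_ne_zero c'), Nat.add_sub_cancel]
    unfold W
    exact congrArg Finset.card
      (Finset.filter_congr (fun w _ => by rw [okb_cons_false_succ]))

/-- Window sum of binomial coefficients. -/
def S (m c : ℕ) : ℕ := ∑ j ∈ Finset.Icc ((m - c)/2) ((m + c)/2), Nat.choose m j

lemma sum_choose_zero : ∀ k : ℕ, ∑ j ∈ Finset.Icc 0 k, Nat.choose 0 j = 1 := by
  intro k
  induction k with
  | zero => simp
  | succ k ih =>
    rw [Finset.sum_Icc_succ_top (Nat.zero_le _), ih]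
    simp [Nat.choose]

lemma S_zero (c : ℕ) : S 0 c = 1 := by
  unfold S
  rw [Nat.zero_sub, Nat.zero_div, Nat.zero_add]
  exact sum_choose_zero _

lemma sum_Icc_bot {a b : ℕ} (h : a ≤ b) (f : ℕ → ℕ) :
    ∑ j ∈ Finset.Icc a b, f j = f a + ∑ j ∈ Finset.Icc (a+1) b, f j := by
  have : Finset.Icc a b = insert a (Finset.Icc (a+1) b) := by
    ext x
    simp only [Finset.mem_Icc, Finset.mem_insert]
    omega
  rw [this, Finset.sum_insert (by simp)]

lemma sum_shift (m a b : ℕ) (ha : 1 ≤ a) :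
    ∑ j ∈ Finset.Icc a (b+1), Nat.choose m (j-1) =
      ∑ j ∈ Finset.Icc (a-1) b, Nat.choose m j := by
  have himg : Finset.Icc a (b+1) = (Finset.Icc (a-1) b).image (· + 1) := by
    rw [Finset.image_add_right_Icc]
    congr 1
    omega
  rw [himg, Finset.sum_image (by intro x _ y _ h; beta_reduce at h; omega)]
  simp

/-- Pascal expansion for a window sum with positive lower endpoint. -/
lemma sum_window_succ (m a b : ℕ) (ha : 1 ≤ a) (hab : a ≤ b) :
    ∑ j ∈ Finset.Icc a b, Nat.choose (m+1) j =
      ∑ j ∈ Finset.Icc a b, Nat.choose m j +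
      ∑ j ∈ Finset.Icc (a-1) (b-1), Nat.choose m j := by
  obtain ⟨b', rfl⟩ : ∃ b', b = b' + 1 := ⟨b - 1, by omega⟩
  have h1 : ∀ j ∈ Finset.Icc a (b'+1),
      Nat.choose (m+1) j = Nat.choose m j + Nat.choose m (j-1) := by
    intro j hj
    simp only [Finset.mem_Icc] at hj
    obtain ⟨j', rfl⟩ : ∃ j', j = j' + 1 := ⟨j - 1, by omega⟩
    rw [Nat.choose_succ_succ', Nat.add_sub_cancel]
    omega
  rw [Finset.sum_congr rfl h1, Finset.sum_add_distrib, sum_shift m a b' ha,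
    Nat.add_sub_cancel]

lemma sum_range_choose_succ (m b : ℕ) :
    ∑ j ∈ Finset.range (b+1), Nat.choose (m+1) j =
      ∑ j ∈ Finset.range (b+1), Nat.choose m j +
      ∑ j ∈ Finset.range b, Nat.choose m j := by
  induction b with
  | zero => simp
  | succ b ih =>
    rw [Finset.sum_range_succ (f := fun j => Nat.choose (m+1) j), ih,
      Finset.sum_range_succ (f := fun j => Nat.choose m j) (b+1),
      Finset.sum_range_succ (f := fun j => Nat.choose m j) b,
      Nat.choose_succ_succ' m b]
    omega

lemma Icc_zero_eq_range (x : ℕ) : Finset.Icc 0 x = Finset.range (x+1) := by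
  ext y
  simp only [Finset.mem_Icc, Finset.mem_range]
  omega

lemma S_succ (m c : ℕ) : S (m+1) c = S m (c+1) + (if c = 0 then 0 else S m (c-1)) := by
  cases c with
  | zero =>
    rw [if_pos rfl, Nat.add_zero]
    unfold S
    rcases Nat.eq_zero_or_pos m with rfl | hm
    · decide
    · set a := (m+1)/2 with ha_def
      have ha : 1 ≤ a := by omega
      have h3 : (m - (0+1))/2 = a - 1 := by omega
      have h1 : (m + 1 - 0)/2 = a := by omega
      rw [h1, h3, Finset.Icc_self, Finset.sum_singleton,
        sum_Icc_bot (show a - 1 ≤ a by omega) (Nat.choose m),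
        show a - 1 + 1 = a by omega, Finset.Icc_self, Finset.sum_singleton]
      rw [show a = (a - 1) + 1 by omega, Nat.choose_succ_succ']
      rw [show a - 1 + 1 - 1 = a - 1 by omega]
      omega
  | succ c' =>
    rw [if_neg (Nat.succ_ne_zero c'), Nat.add_sub_cancel]
    unfold S
    set a := (m - c')/2 with ha_def
    set b := (m + (c'+1) + 1)/2 with hb_def
    have h1 : (m + 1 - (c'+1))/2 = a := by omega
    have h2 : (m + 1 + (c'+1))/2 = b := by omega
    have h4 : (m + c')/2 = b - 1 := by omega
    have h5 : (m - (c'+1+1))/2 = a - 1 := by omega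
    have h6 : (m + (c'+1+1))/2 = b := by omega
    have hab : a ≤ b := by omega
    have hb : 1 ≤ b := by omega
    rw [h1, h2, h5, h6, h4]
    rcases Nat.eq_zero_or_pos a with ha0 | ha1
    · rw [ha0]
      rw [show (0:ℕ) - 1 = 0 by omega]
      rw [Icc_zero_eq_range, Icc_zero_eq_range,
        show b - 1 + 1 = b by omega]
      exact sum_range_choose_succ m b
    · rw [sum_window_succ m a b ha1 hab]
      rw [sum_Icc_bot (show a - 1 ≤ b by omega) (Nat.choose m),
        show a - 1 + 1 = a by omega,
        sum_Icc_bot (show a - 1 ≤ b - 1 by omega) (Nat.choose m),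
        show a - 1 + 1 = a by omega]
      omega

lemma W_eq_S (m : ℕ) : ∀ c, W m c = S m c := by
  induction m with
  | zero => intro c; rw [W_zero, S_zero]
  | succ m ih =>
    intro c
    rw [W_succ, S_succ, ih]
    cases c with
    | zero => simp
    | succ c' => simp [ih]

/-- Counting words of length `m` with `k` trues. -/
lemma card_count_true (m : ℕ) : ∀ k,
    ((allWords m).filter (fun w => w.count true = k)).card = Nat.choose m k := by
  induction m with
  | zero =>
    intro k
    cases k with
    | zero =>
      rw [show allWords 0 = {[]} from rfl, Finset.filter_singleton, if_pos (by simp)]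
      rfl
    | succ k =>
      rw [show allWords 0 = {[]} from rfl, Finset.filter_singleton, if_neg (by simp)]
      simp
  | succ m ih =>
    intro k
    rw [card_filter_allWords_succ]
    cases k with
    | zero =>
      have hT : ((allWords m).filter (fun w => (true :: w).count true = 0)).card = 0 := by
        rw [Finset.card_eq_zero, Finset.filter_eq_empty_iff]
        intro w _
        rw [count_tt]; omega
      have hF : ((allWords m).filter (fun w => (false :: w).count true = 0)) =
          ((allWords m).filter (fun w => w.count true = 0)) := by
        apply Finset.filter_congr
        intro w _
        rw [count_ft]
      rw [hT, hF, ih 0]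
      simp
    | succ k =>
      have hT : ((allWords m).filter (fun w => (true :: w).count true = k + 1)) =
          ((allWords m).filter (fun w => w.count true = k)) := by
        apply Finset.filter_congr
        intro w _
        rw [count_tt]
        simp
      have hF : ((allWords m).filter (fun w => (false :: w).count true = k + 1)) =
          ((allWords m).filter (fun w => w.count true = k + 1)) := by
        apply Finset.filter_congr
        intro w _
        rw [count_ft]
      rw [hT, hF, ih k, ih (k+1), Nat.choose_succ_succ]

theorem strictly_below_count (n : ℕ) (hn : 1 ≤ n) :
    Nat.card {w : NEWord // w.length = 2 * n ∧ strictlyBelowDiag w} =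
      Nat.choose (2 * n) n / 2 ∧
    Nat.card {w : NEWord // w.length = 2 * n ∧ strictlyBelowDiag w} =
      Nat.card {w : NEWord // w.length = 2 * n ∧ w.count true = n ∧
        w.head? = some true} := by
  classical
  have h2n : (2*n - 1) + 1 = 2 * n := by omega
  -- the LHS as a finset card
  have hL : Nat.card {w : NEWord // w.length = 2 * n ∧ strictlyBelowDiag w} =
      ((allWords (2*n - 1)).filter (fun w => okb 0 w = true)).card := by
    have hiff : ∀ w : List Bool,
        (w.length = 2 * n ∧ strictlyBelowDiag w) ↔
          w ∈ (allWords (2*n)).filter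
            (fun w => ∃ v, w = true :: v ∧ okb 0 v = true) := by
      intro w
      rw [Finset.mem_filter, mem_allWords]
      constructor
      · rintro ⟨hlen, hs⟩
        refine ⟨hlen, ?_⟩
        cases w with
        | nil => simp at hlen; omega
        | cons b v =>
          obtain ⟨rfl, hv⟩ := (strictlyBelowDiag_cons b v).1 hs
          exact ⟨v, rfl, hv⟩
      · rintro ⟨hlen, v, rfl, hv⟩
        exact ⟨hlen, (strictlyBelowDiag_cons true v).2 ⟨rfl, hv⟩⟩
    rw [Nat.card_congr (Equiv.subtypeEquivRight hiff), Nat.card_eq_finsetCard]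
    have hsplit := card_filter_allWords_succ
      (fun w => ∃ v, w = true :: v ∧ okb 0 v = true) (2*n - 1)
    rw [h2n] at hsplit
    rw [hsplit]
    have e1 : ((allWords (2*n-1)).filter
        (fun w => ∃ v, (true :: w : List Bool) = true :: v ∧ okb 0 v = true)) =
        ((allWords (2*n-1)).filter (fun w => okb 0 w = true)) := by
      apply Finset.filter_congr
      intro w _
      simp
    have e2 : ((allWords (2*n-1)).filter
        (fun w => ∃ v, (false :: w : List Bool) = true :: v ∧ okb 0 v = true)).card = 0 := by
      rw [Finset.card_eq_zero, Finset.filter_eq_empty_iff]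
      rintro w _ ⟨v, h, -⟩
      simp at h
    rw [e1, e2, Nat.add_zero]
  have hW : ((allWords (2*n - 1)).filter (fun w => okb 0 w = true)).card =
      Nat.choose (2*n - 1) (n - 1) := by
    have hws := W_eq_S (2*n - 1) 0
    rw [W] at hws
    rw [hws, S]
    have h1 : (2*n - 1 - 0) / 2 = n - 1 := by omega
    have h2 : (2*n - 1 + 0) / 2 = n - 1 := by omega
    rw [h1, h2, Finset.Icc_self, Finset.sum_singleton]
  -- binomial identities
  have hpascal : Nat.choose (2*n) n = 2 * Nat.choose (2*n - 1) (n - 1) := by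
    have hs : Nat.choose (2*n - 1) (n - 1) = Nat.choose (2*n - 1) n := by
      rw [show (n : ℕ) - 1 = (2*n - 1) - n by omega]
      exact Nat.choose_symm (by omega)
    have hp := Nat.choose_succ_succ (2*n - 1) (n - 1)
    simp only [Nat.succ_eq_add_one] at hp
    rw [h2n, show (n:ℕ) - 1 + 1 = n by omega] at hp
    omega
  -- RHS count
  have hR : Nat.card {w : NEWord // w.length = 2 * n ∧ w.count true = n ∧
      w.head? = some true} = Nat.choose (2*n - 1) (n - 1) := by
    have hiff : ∀ w : List Bool,
        (w.length = 2 * n ∧ w.count true = n ∧ w.head? = some true) ↔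
          w ∈ (allWords (2*n)).filter
            (fun w => w.count true = n ∧ w.head? = some true) := by
      intro w
      rw [Finset.mem_filter, mem_allWords]
    rw [Nat.card_congr (Equiv.subtypeEquivRight hiff), Nat.card_eq_finsetCard]
    have hsplit := card_filter_allWords_succ
      (fun w => w.count true = n ∧ w.head? = some true) (2*n - 1)
    rw [h2n] at hsplit
    rw [hsplit]
    have e1 : ((allWords (2*n-1)).filter
        (fun w => (true :: w : List Bool).count true = n ∧
          (true :: w : List Bool).head? = some true)) =
        ((allWords (2*n-1)).filter (fun w => w.count true = n - 1)) := by
      apply Finset.filter_congr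
      intro w _
      rw [count_tt]
      simp only [List.head?_cons, and_true]
      omega
    have e2 : ((allWords (2*n-1)).filter
        (fun w => (false :: w : List Bool).count true = n ∧
          (false :: w : List Bool).head? = some true)).card = 0 := by
      rw [Finset.card_eq_zero, Finset.filter_eq_empty_iff]
      rintro w _ ⟨-, h⟩
      simp at h
    rw [e1, e2, Nat.add_zero, card_count_true]
  refine ⟨?_, ?_⟩
  · rw [hL, hW, hpascal]
    omega
  · rw [hL, hW, hR]
end

section
/- For every n ≥ 1, sum_{i+j+k=n} binom(2i,i)binom(2j,j)binom(2k,k) - sum_{i+j=n} binom(2i,i)binom(2j,j) = 2 * (number of pairs (H,X) where H is a balanced up-down path of length 2n and X is a lattice point of H of strictly positive height). -/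
/-- An up-down lattice path, encoded as a `List Bool` with `true` = up step
`(1,1)` and `false` = down step `(1,-1)`. -/
abbrev UDPath := List Bool

/-- The path is balanced: equally many up and down steps. -/
def IsBalanced (w : UDPath) : Prop := w.count true = w.count false

/-- The lattice point reached after `t` steps has strictly positive height. -/
def AboveAt (w : UDPath) (t : ℕ) : Prop :=
  (w.take t).count false < (w.take t).count true

open Finset


private def Ssum (n : ℕ) : ℕ := ∑ i ∈ Finset.range (n+1), Nat.centralBinom i * Nat.centralBinom (n - i)
private def Tsum (n : ℕ) : ℕ := ∑ i ∈ Finset.range (n+1), i * (Nat.centralBinom i * Nat.centralBinom (n - i))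

private lemma two_Tsum (n : ℕ) : 2 * Tsum n = n * Ssum n := by
  have h := Finset.sum_range_reflect (fun i => i * (Nat.centralBinom i * Nat.centralBinom (n - i))) (n+1)
  rw [Tsum, two_mul, Ssum, Finset.mul_sum]
  nth_rewrite 1 [← h]
  rw [← Finset.sum_add_distrib]
  refine Finset.sum_congr rfl ?_
  intro i hi
  simp only [Finset.mem_range] at hi
  have h2 : n + 1 - 1 - i = n - i := by omega
  have h1 : n - (n - i) = i := by omega
  rw [h2, h1, mul_comm (Nat.centralBinom (n-i)) (Nat.centralBinom i), ← Nat.add_mul]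
  congr 1
  omega

private lemma Ssum_succ (n : ℕ) : Ssum (n+1) = 4 * Ssum n := by
  have key : Tsum (n+1) = 2 * (n+1) * Ssum n := by
    have h0 : Tsum (n+1) = ∑ i ∈ Finset.range (n+1),
        (i+1) * (Nat.centralBinom (i+1) * Nat.centralBinom (n - i)) := by
      rw [Tsum, Finset.sum_range_succ' (fun i => i * (Nat.centralBinom i * Nat.centralBinom (n+1 - i))) (n+1)]
      simp only [Nat.zero_mul, Nat.add_zero]
      refine Finset.sum_congr rfl ?_
      intro i hi
      rw [Nat.succ_sub_succ]
    have h1 : ∀ i : ℕ, (i+1) * (Nat.centralBinom (i+1) * Nat.centralBinom (n - i))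
        = 2 * ((2*i+1) * (Nat.centralBinom i * Nat.centralBinom (n - i))) := by
      intro i
      have := Nat.succ_mul_centralBinom_succ i
      calc (i+1) * (Nat.centralBinom (i+1) * Nat.centralBinom (n-i)) = ((i+1) * Nat.centralBinom (i+1)) * Nat.centralBinom (n-i) := by ring
        _ = (2 * (2*i+1) * Nat.centralBinom i) * Nat.centralBinom (n-i) := by rw [this]
        _ = 2 * ((2*i+1) * (Nat.centralBinom i * Nat.centralBinom (n-i))) := by ring
    rw [h0]
    simp only [h1]
    rw [← Finset.mul_sum]
    have h2 : ∑ i ∈ Finset.range (n+1), (2*i+1) * (Nat.centralBinom i * Nat.centralBinom (n - i))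
        = 2 * Tsum n + Ssum n := by
      rw [Tsum, Ssum, Finset.mul_sum, ← Finset.sum_add_distrib]
      refine Finset.sum_congr rfl ?_
      intro i _
      ring
    rw [h2, two_Tsum]
    ring
  have h3 : (n+1) * Ssum (n+1) = 2 * Tsum (n+1) := (two_Tsum (n+1)).symm
  have h4 : (n+1) * Ssum (n+1) = (n+1) * (4 * Ssum n) := by rw [h3, key]; ring
  exact Nat.eq_of_mul_eq_mul_left (Nat.succ_pos n) h4

private lemma Ssum_eq (n : ℕ) : Ssum n = 4 ^ n := by
  induction n with
  | zero => simp [Ssum, Nat.centralBinom]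
  | succ n ih => rw [Ssum_succ, ih]; ring

private lemma Asum_eq (n : ℕ) :
    ∑ i ∈ Finset.range (n+1), Nat.centralBinom i * 4 ^ (n - i) = (2*n+1) * Nat.centralBinom n := by
  induction n with
  | zero => simp [Nat.centralBinom]
  | succ n ih =>
    rw [Finset.sum_range_succ]
    have h1 : ∑ i ∈ Finset.range (n+1), Nat.centralBinom i * 4 ^ (n + 1 - i)
        = 4 * ∑ i ∈ Finset.range (n+1), Nat.centralBinom i * 4 ^ (n - i) := by
      rw [Finset.mul_sum]
      refine Finset.sum_congr rfl ?_
      intro i hi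
      simp only [Finset.mem_range] at hi
      have : n + 1 - i = (n - i) + 1 := by omega
      rw [this]
      ring
    rw [h1, ih, Nat.sub_self, pow_zero, mul_one]
    have h := Nat.succ_mul_centralBinom_succ n
    nlinarith [h]


/-- All boolean lists of length `m`. -/
private def allB : ℕ → Finset (List Bool)
  | 0 => {[]}
  | m+1 => ((allB m).image (List.cons true)) ∪ ((allB m).image (List.cons false))

private lemma mem_allB : ∀ {m : ℕ} {w : List Bool}, w ∈ allB m ↔ w.length = m := by
  intro m
  induction m with
  | zero => intro w; cases w <;> simp [allB]
  | succ m ih =>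
    intro w
    cases w with
    | nil => simp [allB]
    | cons b w =>
      cases b <;> simp [allB, ih]

private lemma count_tf_s18 (w : List Bool) : w.count true + w.count false = w.length := by
  induction w with
  | nil => simp
  | cons b w ih => cases b <;> simp [List.count_cons] <;> omega

private lemma card_allB_count (m : ℕ) : ∀ k : ℕ,
    ((allB m).filter (fun w => w.count true = k)).card = m.choose k := by
  induction m with
  | zero =>
    intro k
    cases k <;> simp [allB, Finset.filter_singleton]
  | succ m ih =>
    intro k
    have hdisj : Disjoint ((allB m).image (List.cons true))
        ((allB m).image (List.cons false)) := by
      rw [Finset.disjoint_left]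
      rintro a ha hb
      simp only [Finset.mem_image] at ha hb
      obtain ⟨u, _, hu⟩ := ha
      obtain ⟨v, _, hv⟩ := hb
      rw [← hv] at hu
      exact absurd (List.head_eq_of_cons_eq hu) (by simp)
    rw [allB, Finset.filter_union,
      Finset.card_union_of_disjoint (Finset.disjoint_filter_filter hdisj),
      Finset.filter_image, Finset.filter_image,
      Finset.card_image_of_injective _ List.cons_injective,
      Finset.card_image_of_injective _ List.cons_injective]
    simp only [List.count_cons]
    norm_num
    cases k with
    | zero =>
      have h1 : ((allB m).filter
          (fun a => List.count true a + 1 = 0)).card = 0 := by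
        rw [Finset.card_eq_zero, Finset.filter_eq_empty_iff]
        intro w _
        simp
      have h2 := ih 0
      rw [h1]
      simpa using h2
    | succ k =>
      have e1 : ((allB m).filter
          (fun a => List.count true a + 1 = k + 1))
          = (allB m).filter (fun w => w.count true = k) := by
        refine Finset.filter_congr ?_
        intro w _
        constructor <;> (intro h; omega)
      rw [e1, ih k, ih (k+1), Nat.choose_succ_succ]

/-- Balanced boolean lists of length `m`. -/
private def balB (m : ℕ) : Finset (List Bool) :=
  (allB m).filter (fun w => w.count true = w.count false)

private lemma mem_balB {m : ℕ} {w : List Bool} :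
    w ∈ balB m ↔ w.length = m ∧ w.count true = w.count false := by
  simp [balB, mem_allB]

private lemma card_balB (i : ℕ) : (balB (2*i)).card = Nat.centralBinom i := by
  have : balB (2*i) = (allB (2*i)).filter (fun w => w.count true = i) := by
    refine Finset.filter_congr ?_
    intro w hw
    rw [mem_allB] at hw
    have := count_tf_s18 w
    omega
  rw [this, card_allB_count, Nat.centralBinom_eq_two_mul_choose]

private lemma balB_odd {t : ℕ} (ht : ¬ Even t) : balB t = ∅ := by
  rw [Finset.eq_empty_iff_forall_notMem]
  intro w hw
  rw [mem_balB] at hw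
  have := count_tf_s18 w
  exact ht ⟨w.count true, by omega⟩

private lemma not_inj : Function.Injective not := by
  intro a b h; cases a <;> cases b <;> simp_all

private lemma count_map_not_t (l : List Bool) : (l.map not).count true = l.count false := by
  simpa using List.count_map_of_injective l not not_inj false

private lemma count_map_not_f (l : List Bool) : (l.map not).count false = l.count true := by
  simpa using List.count_map_of_injective l not not_inj true

private lemma reflect_card (n t : ℕ) :
    ((balB (2*n)).filter (fun w => (w.take t).count true < (w.take t).count false)).card
      = ((balB (2*n)).filter (fun w => (w.take t).count false < (w.take t).count true)).card := by
  have hmem : ∀ w : List Bool, w ∈ balB (2*n) → w.map not ∈ balB (2*n) := by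
    intro w hw
    rw [mem_balB] at hw ⊢
    rw [List.length_map, count_map_not_t, count_map_not_f]
    omega
  have htake : ∀ (w : List Bool), ((w.map not).take t) = (w.take t).map not :=
    fun w => List.map_take.symm
  have hinv : ∀ w : List Bool, (w.map not).map not = w := by
    intro w
    induction w with
    | nil => simp
    | cons b l ih2 => cases b <;> simp_all
  refine Finset.card_bij' (fun w _ => w.map not) (fun w _ => w.map not) ?_ ?_ ?_ ?_
  · intro w hw
    rw [Finset.mem_filter] at hw ⊢
    refine ⟨hmem w hw.1, ?_⟩
    rw [htake, count_map_not_t, count_map_not_f]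
    exact hw.2
  · intro w hw
    rw [Finset.mem_filter] at hw ⊢
    refine ⟨hmem w hw.1, ?_⟩
    rw [htake, count_map_not_t, count_map_not_f]
    exact hw.2
  · intro w _; exact hinv w
  · intro w _; exact hinv w

private lemma zero_card (n t : ℕ) (ht : t ≤ 2*n) :
    ((balB (2*n)).filter (fun w => (w.take t).count true = (w.take t).count false)).card
      = (balB t).card * (balB (2*n - t)).card := by
  rw [← Finset.card_product]
  refine Finset.card_bij' (fun w _ => (w.take t, w.drop t)) (fun p _ => p.1 ++ p.2) ?_ ?_ ?_ ?_
  · intro w hw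
    rw [Finset.mem_filter, mem_balB] at hw
    obtain ⟨⟨hl, hb⟩, hz⟩ := hw
    have h1 : (w.take t).count true + (w.drop t).count true = w.count true := by
      have := congrArg (List.count true) (List.take_append_drop t w)
      rwa [List.count_append] at this
    have h2 : (w.take t).count false + (w.drop t).count false = w.count false := by
      have := congrArg (List.count false) (List.take_append_drop t w)
      rwa [List.count_append] at this
    rw [Finset.mem_product, mem_balB, mem_balB]
    simp only [Prod.fst, Prod.snd]
    refine ⟨⟨?_, hz⟩, ?_, ?_⟩
    · rw [List.length_take]; omega
    · rw [List.length_drop]; omega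
    · omega
  · intro p hp
    rw [Finset.mem_product, mem_balB, mem_balB] at hp
    obtain ⟨⟨hl1, hb1⟩, hl2, hb2⟩ := hp
    rw [Finset.mem_filter, mem_balB]
    have htke : (p.1 ++ p.2).take t = p.1 := List.take_left' hl1
    refine ⟨⟨?_, ?_⟩, ?_⟩
    · rw [List.length_append]; omega
    · rw [List.count_append, List.count_append]; omega
    · rw [htke]; exact hb1
  · intro w _; exact List.take_append_drop t w
  · intro p hp
    rw [Finset.mem_product, mem_balB, mem_balB] at hp
    obtain ⟨⟨hl1, _⟩, _, _⟩ := hp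
    exact Prod.ext (List.take_left' hl1) (List.drop_left' hl1)

private lemma trichotomy_card (n t : ℕ) :
    (balB (2*n)).card =
      ((balB (2*n)).filter (fun w => (w.take t).count false < (w.take t).count true)).card
      + ((balB (2*n)).filter (fun w => (w.take t).count true < (w.take t).count false)).card
      + ((balB (2*n)).filter (fun w => (w.take t).count true = (w.take t).count false)).card := by
  have h1 := Finset.card_filter_add_card_filter_not
    (s := balB (2*n)) (fun w => (w.take t).count false < (w.take t).count true)
  have h2 := Finset.card_filter_add_card_filter_not
    (s := (balB (2*n)).filter
      (fun w => ¬ (w.take t).count false < (w.take t).count true))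
    (fun w => (w.take t).count true < (w.take t).count false)
  rw [Finset.filter_filter, Finset.filter_filter] at h2
  have e1 : ((balB (2*n)).filter (fun w =>
      (¬ (w.take t).count false < (w.take t).count true) ∧
        (w.take t).count true < (w.take t).count false))
      = (balB (2*n)).filter (fun w => (w.take t).count true < (w.take t).count false) :=
    Finset.filter_congr (fun w _ => by omega)
  have e2 : ((balB (2*n)).filter (fun w =>
      (¬ (w.take t).count false < (w.take t).count true) ∧
        ¬ (w.take t).count true < (w.take t).count false))
      = (balB (2*n)).filter (fun w => (w.take t).count true = (w.take t).count false) :=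
    Finset.filter_congr (fun w _ => by omega)
  rw [e1, e2] at h2
  omega

private lemma key_t (n t : ℕ) (ht : t ≤ 2*n) :
    Nat.centralBinom n =
      2 * ((balB (2*n)).filter
        (fun w => (w.take t).count false < (w.take t).count true)).card
      + (balB t).card * (balB (2*n - t)).card := by
  have h := trichotomy_card n t
  rw [reflect_card, zero_card n t ht, card_balB] at h
  omega

private lemma sumPairL (m : ℕ) (g : ℕ → ℕ) :
    ∑ t ∈ Finset.range (2*m), g t = ∑ i ∈ Finset.range m, (g (2*i) + g (2*i+1)) := by
  induction m with
  | zero => simp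
  | succ m ih =>
    have : 2 * (m+1) = 2*m + 1 + 1 := by ring
    rw [this, Finset.sum_range_succ, Finset.sum_range_succ, Finset.sum_range_succ, ← ih]
    omega

private lemma sum_zero (n : ℕ) :
    ∑ t ∈ Finset.range (2*n+1), (balB t).card * (balB (2*n - t)).card = 4 ^ n := by
  set g : ℕ → ℕ := fun t => (balB t).card * (balB (2*n - t)).card with hg
  have hodd : ∀ j : ℕ, g (2*j+1) = 0 := by
    intro j
    have : balB (2*j+1) = ∅ := balB_odd (by simp [Nat.even_add_one, parity_simps])
    simp [hg, this]
  have hext : ∑ t ∈ Finset.range (2*(n+1)), g t = ∑ t ∈ Finset.range (2*n+1), g t := by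
    rw [show 2*(n+1) = (2*n+1)+1 from by ring, Finset.sum_range_succ, hodd n, Nat.add_zero]
  rw [← hext, sumPairL]
  have : ∀ i ∈ Finset.range (n+1), g (2*i) + g (2*i+1)
      = Nat.centralBinom i * Nat.centralBinom (n - i) := by
    intro i hi
    rw [hodd i, Nat.add_zero, hg]
    simp only []
    have h2 : 2*n - 2*i = 2*(n-i) := by omega
    rw [h2, card_balB, card_balB]
  rw [Finset.sum_congr rfl this]
  exact Ssum_eq n

private lemma main_count (n : ℕ) :
    (2*n+1) * Nat.centralBinom n =
      2 * (∑ t ∈ Finset.range (2*n+1), ((balB (2*n)).filter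
        (fun w => (w.take t).count false < (w.take t).count true)).card)
      + 4 ^ n := by
  rw [Finset.mul_sum, ← sum_zero n, ← Finset.sum_add_distrib]
  have : ∀ t ∈ Finset.range (2*n+1),
      2 * ((balB (2*n)).filter
        (fun w => (w.take t).count false < (w.take t).count true)).card
      + (balB t).card * (balB (2*n - t)).card = Nat.centralBinom n := by
    intro t ht
    rw [Finset.mem_range] at ht
    exact (key_t n t (by omega)).symm
  rw [Finset.sum_congr rfl this, Finset.sum_const, Finset.card_range, smul_eq_mul]

private def Pfin (n : ℕ) : Finset (List Bool × ℕ) :=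
  (Finset.range (2*n+1)).biUnion (fun t =>
    ((balB (2*n)).filter
      (fun w => (w.take t).count false < (w.take t).count true)).image (fun w => (w, t)))

private lemma card_Pfin (n : ℕ) :
    (Pfin n).card = ∑ t ∈ Finset.range (2*n+1), ((balB (2*n)).filter
        (fun w => (w.take t).count false < (w.take t).count true)).card := by
  rw [Pfin, Finset.card_biUnion]
  · refine Finset.sum_congr rfl ?_
    intro t _
    exact Finset.card_image_of_injective _ (fun a b h => (Prod.mk.injEq _ _ _ _).mp h |>.1)
  · intro x _ y _ hxy
    rw [Function.onFun, Finset.disjoint_left]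
    intro q hq hq'
    simp only [Finset.mem_image] at hq hq'
    obtain ⟨u, _, hu⟩ := hq
    obtain ⟨v, _, hv⟩ := hq'
    apply hxy
    rw [← hu] at hv
    exact ((Prod.mk.injEq _ _ _ _).mp hv).2.symm

private lemma mem_Pfin {n : ℕ} {q : List Bool × ℕ} :
    q ∈ Pfin n ↔ q.1.length = 2*n ∧ IsBalanced q.1 ∧ q.2 ≤ 2*n ∧ AboveAt q.1 q.2 := by
  simp only [Pfin, Finset.mem_biUnion, Finset.mem_range, Finset.mem_image,
    Finset.mem_filter, mem_balB, IsBalanced, AboveAt]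
  constructor
  · rintro ⟨t, ht, w, ⟨⟨hl, hb⟩, ha⟩, hq⟩
    rw [← hq]
    exact ⟨hl, hb, by omega, ha⟩
  · rintro ⟨hl, hb, ht, ha⟩
    exact ⟨q.2, by omega, q.1, ⟨⟨hl, hb⟩, ha⟩, rfl⟩

private lemma natCard_eq (n : ℕ) :
    Nat.card {q : UDPath × ℕ //
        q.1.length = 2 * n ∧ IsBalanced q.1 ∧ q.2 ≤ 2 * n ∧
          AboveAt q.1 q.2} = (Pfin n).card := by
  rw [← Fintype.card_coe (Pfin n), ← Nat.card_eq_fintype_card]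
  exact Nat.card_congr (Equiv.subtypeEquivRight (fun q => mem_Pfin.symm))

theorem off_axis_marked_count (n : ℕ) (hn : 1 ≤ n) :
    (∑ p ∈ Finset.HasAntidiagonal.antidiagonal n, ∑ q ∈ Finset.HasAntidiagonal.antidiagonal p.2,
        Nat.choose (2 * p.1) p.1 * Nat.choose (2 * q.1) q.1 *
          Nat.choose (2 * q.2) q.2) -
      (∑ p ∈ Finset.HasAntidiagonal.antidiagonal n,
        Nat.choose (2 * p.1) p.1 * Nat.choose (2 * p.2) p.2) =
    2 * Nat.card {q : UDPath × ℕ //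
        q.1.length = 2 * n ∧ IsBalanced q.1 ∧ q.2 ≤ 2 * n ∧
          AboveAt q.1 q.2} := by
  have h1 : (∑ p ∈ Finset.HasAntidiagonal.antidiagonal n, ∑ q ∈ Finset.HasAntidiagonal.antidiagonal p.2,
        Nat.choose (2 * p.1) p.1 * Nat.choose (2 * q.1) q.1 *
          Nat.choose (2 * q.2) q.2) = (2*n+1) * Nat.centralBinom n := by
    rw [Finset.Nat.sum_antidiagonal_eq_sum_range_succ_mk, ← Asum_eq]
    refine Finset.sum_congr rfl ?_
    intro i _
    rw [Finset.Nat.sum_antidiagonal_eq_sum_range_succ_mk]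
    dsimp only
    rw [Nat.succ_eq_add_one, ← Ssum_eq (n - i), Ssum, Finset.mul_sum]
    refine Finset.sum_congr rfl ?_
    intro k _
    rw [← Nat.centralBinom_eq_two_mul_choose, ← Nat.centralBinom_eq_two_mul_choose,
      ← Nat.centralBinom_eq_two_mul_choose, mul_assoc]
  have h2 : (∑ p ∈ Finset.HasAntidiagonal.antidiagonal n,
        Nat.choose (2 * p.1) p.1 * Nat.choose (2 * p.2) p.2) = 4 ^ n := by
    rw [Finset.Nat.sum_antidiagonal_eq_sum_range_succ_mk]
    dsimp only
    rw [Nat.succ_eq_add_one, ← Ssum_eq n, Ssum]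
    refine Finset.sum_congr rfl ?_
    intro i _
    rw [← Nat.centralBinom_eq_two_mul_choose, ← Nat.centralBinom_eq_two_mul_choose]
  rw [h1, h2, natCard_eq, card_Pfin]
  have := main_count n
  omega
end
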